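/- Let C be a braided monoidal category containing a symmetric subcategory A. For objects c, c' with enriched hom-object H = Hom_underline(c,c') in A (representing a ↦ Hom_C(a⊗c,c')), the assignment b_a : a ⊗ H → H ⊗ a given by the composite of the isomorphism a ⊗ H ≅ Hom_underline(c, a⊗c'), the map induced by postcomposition with the inverse double braiding β⁻¹_{a,c'} ∘ β⁻¹_{c',a} : a⊗c' → a⊗c', the inverse isomorphism, and the symmetry s_{a,H} of A, defines a half-braiding on H, i.e., it is natural in a and satisfies the multiplicativity condition b_{a⊗a'} = (b_a ⊗ id_{a'}) ∘ (id_a ⊗ b_{a'}). Hence (H, b) is an object of the Drinfeld centre Z(A). -/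

import Mathlib

open CategoryTheory MonoidalCategory Functor.LaxMonoidal Functor.OplaxMonoidal

section HalfBraidAux

open BraidedCategory

variable {C : Type*} [Category C] [MonoidalCategory C] [BraidedCategory C]
variable {h c c' : C}

private lemma star_lemma (ε : h ⊗ c ⟶ c') (y : C) :
    ((β_ y h).inv ▷ c) ≫ (α_ y h c).hom ≫ (y ◁ ε) =
      (α_ h y c).hom ≫ (h ◁ (β_ y c).hom) ≫ (α_ h c y).inv ≫ (ε ▷ y) ≫ (β_ y c').inv := by
  have h1 : (ε ▷ y) ≫ (β_ y c').inv = (β_ y (h ⊗ c)).inv ≫ (y ◁ ε) :=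
    braiding_inv_naturality_left ε y
  rw [h1, braiding_tensor_right_inv]
  simp

private lemma hey_lemma (ε : h ⊗ c ⟶ c') {y : C} (gy : y ⊗ h ⟶ y ⊗ h)
    (hy : gy ▷ c ≫ (α_ y h c).hom ≫ y ◁ ε =
      (α_ y h c).hom ≫ y ◁ ε ≫ (β_ c' y).inv ≫ (β_ y c').inv) :
    ((gy ≫ (β_ y h).hom) ▷ c) ≫ (α_ h y c).hom ≫ (h ◁ (β_ y c).hom) ≫ (α_ h c y).inv ≫ (ε ▷ y) =
      (α_ y h c).hom ≫ (y ◁ ε) ≫ (β_ c' y).inv := by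
  rw [← cancel_mono (β_ y c').inv]
  simp only [Category.assoc]
  rw [← star_lemma ε y]
  simp only [comp_whiskerRight, Category.assoc]
  rw [← comp_whiskerRight_assoc (β_ y h).hom (β_ y h).inv, Iso.hom_inv_id, id_whiskerRight,
    Category.id_comp]
  exact hy

private lemma P_tensor_core (ε : h ⊗ c ⟶ c') {x y : C}
    (gx : x ⊗ h ⟶ x ⊗ h) (gy : y ⊗ h ⟶ y ⊗ h)
    (hx : gx ▷ c ≫ (α_ x h c).hom ≫ x ◁ ε =
      (α_ x h c).hom ≫ x ◁ ε ≫ (β_ c' x).inv ≫ (β_ x c').inv)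
    (hy : gy ▷ c ≫ (α_ y h c).hom ≫ y ◁ ε =
      (α_ y h c).hom ≫ y ◁ ε ≫ (β_ c' y).inv ≫ (β_ y c').inv) :
    (((α_ x y h).hom ≫ x ◁ (gy ≫ (β_ y h).hom) ≫ (α_ x h y).inv ≫
        (gx ≫ (β_ x h).hom) ▷ y ≫ (α_ h x y).hom ≫ (β_ (x ⊗ y) h).inv) ▷ c) ≫
      (α_ (x ⊗ y) h c).hom ≫ ((x ⊗ y) ◁ ε) =
    (α_ (x ⊗ y) h c).hom ≫ ((x ⊗ y) ◁ ε) ≫ (β_ c' (x ⊗ y)).inv ≫ (β_ (x ⊗ y) c').inv := by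
  have hbr : (α_ x y h).hom ≫ x ◁ (gy ≫ (β_ y h).hom) ≫ (α_ x h y).inv ≫
        (gx ≫ (β_ x h).hom) ▷ y ≫ (α_ h x y).hom ≫ (β_ (x ⊗ y) h).inv =
      (α_ x y h).hom ≫ x ◁ (gy ≫ (β_ y h).hom) ≫ (α_ x h y).inv ≫
        gx ▷ y ≫ (α_ x h y).hom ≫ x ◁ (β_ y h).inv ≫ (α_ x y h).inv := by
    rw [braiding_tensor_left_inv]
    simp only [comp_whiskerRight, Category.assoc, Iso.hom_inv_id_assoc]
    rw [← comp_whiskerRight_assoc (β_ x h).hom (β_ x h).inv, Iso.hom_inv_id, id_whiskerRight,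
      Category.id_comp]
  rw [hbr]
  calc ((α_ x y h).hom ≫ x ◁ (gy ≫ (β_ y h).hom) ≫ (α_ x h y).inv ≫
        gx ▷ y ≫ (α_ x h y).hom ≫ x ◁ (β_ y h).inv ≫ (α_ x y h).inv) ▷ c ≫
      (α_ (x ⊗ y) h c).hom ≫ ((x ⊗ y) ◁ ε)
    _ = ((α_ x y h).hom ▷ c) ≫ ((x ◁ (gy ≫ (β_ y h).hom)) ▷ c) ≫ ((α_ x h y).inv ▷ c) ≫
        ((gx ▷ y) ▷ c) ≫ ((α_ x h y).hom ▷ c) ≫ (α_ x (h ⊗ y) c).hom ≫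
        (x ◁ (((β_ y h).inv ▷ c) ≫ (α_ y h c).hom ≫ (y ◁ ε))) ≫ (α_ x y c').inv := by
        monoidal
    _ = ((α_ x y h).hom ▷ c) ≫ ((x ◁ (gy ≫ (β_ y h).hom)) ▷ c) ≫ ((α_ x h y).inv ▷ c) ≫
        ((gx ▷ y) ▷ c) ≫ ((α_ x h y).hom ▷ c) ≫ (α_ x (h ⊗ y) c).hom ≫
        (x ◁ ((α_ h y c).hom ≫ (h ◁ (β_ y c).hom) ≫ (α_ h c y).inv ≫ (ε ▷ y) ≫ (β_ y c').inv)) ≫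
        (α_ x y c').inv := by
        rw [star_lemma]
    _ = ((α_ x y h).hom ▷ c) ≫ ((x ◁ (gy ≫ (β_ y h).hom)) ▷ c) ≫ ((α_ x h y).inv ▷ c) ≫
        (α_ (x ⊗ h) y c).hom ≫ (gx ▷ (y ⊗ c)) ≫ ((x ⊗ h) ◁ (β_ y c).hom) ≫
        (α_ (x ⊗ h) c y).inv ≫ (((α_ x h c).hom ≫ (x ◁ ε)) ▷ y) ≫ (α_ x c' y).hom ≫
        (x ◁ (β_ y c').inv) ≫ (α_ x y c').inv := by
        monoidal
    _ = ((α_ x y h).hom ▷ c) ≫ ((x ◁ (gy ≫ (β_ y h).hom)) ▷ c) ≫ ((α_ x h y).inv ▷ c) ≫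
        (α_ (x ⊗ h) y c).hom ≫ ((x ⊗ h) ◁ (β_ y c).hom) ≫ (gx ▷ (c ⊗ y)) ≫
        (α_ (x ⊗ h) c y).inv ≫ (((α_ x h c).hom ≫ (x ◁ ε)) ▷ y) ≫ (α_ x c' y).hom ≫
        (x ◁ (β_ y c').inv) ≫ (α_ x y c').inv := by
        rw [← whisker_exchange_assoc]
    _ = ((α_ x y h).hom ▷ c) ≫ ((x ◁ (gy ≫ (β_ y h).hom)) ▷ c) ≫ ((α_ x h y).inv ▷ c) ≫
        (α_ (x ⊗ h) y c).hom ≫ ((x ⊗ h) ◁ (β_ y c).hom) ≫ (α_ (x ⊗ h) c y).inv ≫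
        ((gx ▷ c ≫ (α_ x h c).hom ≫ x ◁ ε) ▷ y) ≫ (α_ x c' y).hom ≫
        (x ◁ (β_ y c').inv) ≫ (α_ x y c').inv := by
        monoidal
    _ = ((α_ x y h).hom ▷ c) ≫ ((x ◁ (gy ≫ (β_ y h).hom)) ▷ c) ≫ ((α_ x h y).inv ▷ c) ≫
        (α_ (x ⊗ h) y c).hom ≫ ((x ⊗ h) ◁ (β_ y c).hom) ≫ (α_ (x ⊗ h) c y).inv ≫
        (((α_ x h c).hom ≫ x ◁ ε ≫ (β_ c' x).inv ≫ (β_ x c').inv) ▷ y) ≫ (α_ x c' y).hom ≫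
        (x ◁ (β_ y c').inv) ≫ (α_ x y c').inv := by
        rw [hx]
    _ = ((α_ x y h).hom ▷ c) ≫ (α_ x (y ⊗ h) c).hom ≫
        (x ◁ (((gy ≫ (β_ y h).hom) ▷ c) ≫ (α_ h y c).hom ≫ (h ◁ (β_ y c).hom) ≫
          (α_ h c y).inv ≫ (ε ▷ y))) ≫ (α_ x c' y).inv ≫
        ((((β_ c' x).inv ≫ (β_ x c').inv) ▷ y)) ≫ (α_ x c' y).hom ≫
        (x ◁ (β_ y c').inv) ≫ (α_ x y c').inv := by
        monoidal
    _ = ((α_ x y h).hom ▷ c) ≫ (α_ x (y ⊗ h) c).hom ≫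
        (x ◁ ((α_ y h c).hom ≫ (y ◁ ε) ≫ (β_ c' y).inv)) ≫ (α_ x c' y).inv ≫
        ((((β_ c' x).inv ≫ (β_ x c').inv) ▷ y)) ≫ (α_ x c' y).hom ≫
        (x ◁ (β_ y c').inv) ≫ (α_ x y c').inv := by
        rw [hey_lemma ε gy hy]
    _ = (α_ (x ⊗ y) h c).hom ≫ ((x ⊗ y) ◁ ε) ≫ (β_ c' (x ⊗ y)).inv ≫ (β_ (x ⊗ y) c').inv := by
        rw [braiding_tensor_right_inv, braiding_tensor_left_inv]
        monoidal

set_option linter.unusedSectionVars false in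
private lemma assoc_exch {x y u v w : C} (f : x ⟶ y) (ε : u ⊗ v ⟶ w) :
    ((f ▷ u) ▷ v) ≫ (α_ y u v).hom ≫ (y ◁ ε) = (α_ x u v).hom ≫ (x ◁ ε) ≫ (f ▷ w) := by
  rw [associator_naturality_left_assoc, ← whisker_exchange]

private lemma u_nat {x y : C} (f : x ⟶ y) (c' : C) :
    f ▷ c' ≫ (β_ c' y).inv ≫ (β_ y c').inv = (β_ c' x).inv ≫ (β_ x c').inv ≫ f ▷ c' := by
  simp

private lemma P_conj (ε : h ⊗ c ⟶ c') {w z : C} (m : w ≅ z) (g : w ⊗ h ⟶ w ⊗ h)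
    (hg : g ▷ c ≫ (α_ w h c).hom ≫ w ◁ ε =
      (α_ w h c).hom ≫ w ◁ ε ≫ (β_ c' w).inv ≫ (β_ w c').inv) :
    ((m.inv ▷ h) ≫ g ≫ (m.hom ▷ h)) ▷ c ≫ (α_ z h c).hom ≫ z ◁ ε =
      (α_ z h c).hom ≫ z ◁ ε ≫ (β_ c' z).inv ≫ (β_ z c').inv := by
  have t1 : (m.hom ▷ h) ▷ c ≫ (α_ z h c).hom ≫ z ◁ ε =
      (α_ w h c).hom ≫ (w ◁ ε) ≫ (m.hom ▷ c') := assoc_exch m.hom ε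
  have t2 : (m.inv ▷ h) ▷ c ≫ (α_ w h c).hom ≫ w ◁ ε =
      (α_ z h c).hom ≫ (z ◁ ε) ≫ (m.inv ▷ c') := assoc_exch m.inv ε
  simp only [comp_whiskerRight, Category.assoc]
  rw [t1, reassoc_of% hg, reassoc_of% t2]
  simp only [braiding_inv_naturality_left_assoc, braiding_inv_naturality_right_assoc]
  simp [← comp_whiskerRight_assoc]

private lemma binv_nat {x y : C} (f : x ⟶ y) (h : C) :
    h ◁ f ≫ (β_ y h).inv = (β_ x h).inv ≫ f ▷ h :=
  braiding_inv_naturality_right h f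

end HalfBraidAux
set_option maxHeartbeats 1000000 in
/-- Let `C` be a braided monoidal category containing a symmetric monoidal
category `A` via a braided monoidal functor `ι`, with enriched hom-objects `H c c'` in `A`
representing `a ↦ Hom_C(ι a ⊗ c, c')`.  For fixed `c, c'`, let `ψ a : a ⊗ H c c' ≅ H c (ι a ⊗ c')`
be the canonical isomorphism, `D a` the endomorphism of `H c (ι a ⊗ c')` induced by
postcomposition with the inverse double braiding `β⁻¹_{a,c'} ∘ β⁻¹_{c',a}`, and let
`b a : a ⊗ H c c' ⟶ H c c' ⊗ a` be `ψ_a ≫ D a ≫ ψ_a⁻¹` followed by the symmetry of `A`.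
Then `b` is a half-braiding on `H c c'`: it is natural in `a`, satisfies the multiplicativity
condition `b_{a⊗a'} = (b_a ⊗ id) ∘ (id ⊗ b_{a'})`, and each component is an isomorphism.
Hence `(H c c', b)` is an object of the Drinfeld centre `Z(A)`. -/
theorem half_braiding_on_enriched_hom
    {A C : Type*} [Category A] [Category C]
    [MonoidalCategory A] [MonoidalCategory C]
    [SymmetricCategory A] [BraidedCategory C]
    (ι : A ⥤ C) [ι.Braided]
    (H : C → C → A)
    (φ : ∀ (a : A) (c c' : C), (a ⟶ H c c') ≃ (ι.obj a ⊗ c ⟶ c'))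
    (φnat : ∀ {a a' : A} (h : a' ⟶ a) {c c' : C} (f : a ⟶ H c c'),
      φ a' c c' (h ≫ f) = (ι.map h ▷ c) ≫ φ a c c' f)
    (c c' : C)
    (ψ : ∀ a : A, ((a ⊗ H c c' : A) ≅ H c (ι.obj a ⊗ c')))
    (hψ : ∀ a : A, φ (a ⊗ H c c') c (ι.obj a ⊗ c') (ψ a).hom =
      (δ ι a (H c c') ▷ c) ≫ (α_ (ι.obj a) (ι.obj (H c c')) c).hom ≫
        (ι.obj a ◁ φ (H c c') c c' (𝟙 (H c c'))))
    (D : ∀ a : A, (H c (ι.obj a ⊗ c') ⟶ H c (ι.obj a ⊗ c')))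
    (hD : ∀ (a x : A) (f : x ⟶ H c (ι.obj a ⊗ c')),
      φ x c (ι.obj a ⊗ c') (f ≫ D a) =
        φ x c (ι.obj a ⊗ c') f ≫ (β_ c' (ι.obj a)).inv ≫ (β_ (ι.obj a) c').inv)
    (b : ∀ a : A, ((a ⊗ H c c' : A) ⟶ H c c' ⊗ a))
    (hb : ∀ a : A, b a = (ψ a).hom ≫ D a ≫ (ψ a).inv ≫ (β_ a (H c c')).hom) :
    -- naturality of the half-braiding
    (∀ (a a' : A) (g : a ⟶ a'), (g ▷ H c c') ≫ b a' = b a ≫ (H c c' ◁ g)) ∧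
    -- multiplicativity of the half-braiding
    (∀ a a' : A, b (a ⊗ a') =
      (α_ a a' (H c c')).hom ≫ (a ◁ b a') ≫ (α_ a (H c c') a').inv ≫
        (b a ▷ a') ≫ (α_ (H c c') a a').hom) ∧
    -- each component is invertible
    (∀ a : A, IsIso (b a)) := by
  classical
  -- the "evaluation" description of φ
  have phi_eval : ∀ {x : A} {d : C} (f : x ⟶ H c d),
      φ x c d f = (ι.map f ▷ c) ≫ φ (H c d) c d (𝟙 (H c d)) := by
    intro x d f
    simpa using φnat f (𝟙 (H c d))
  -- the key property of `f_a := ψ_a ≫ D_a ≫ ψ_a⁻¹`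
  have K : ∀ a : A, ι.map ((ψ a).hom ≫ D a ≫ (ψ a).inv) ▷ c ≫ φ _ c _ (ψ a).hom =
      φ _ c _ (ψ a).hom ≫ (β_ c' (ι.obj a)).inv ≫ (β_ (ι.obj a) c').inv := by
    intro a
    have h1 : (((ψ a).hom ≫ D a ≫ (ψ a).inv) ≫ (ψ a).hom) = (ψ a).hom ≫ D a := by simp
    rw [← φnat, h1, hD]
  -- the property `P` in the braided ambient category
  have P : ∀ a : A, (μ ι a (H c c') ≫ ι.map ((ψ a).hom ≫ D a ≫ (ψ a).inv) ≫ δ ι a (H c c')) ▷ c ≫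
      (α_ (ι.obj a) (ι.obj (H c c')) c).hom ≫ (ι.obj a ◁ φ (H c c') c c' (𝟙 (H c c'))) =
      (α_ (ι.obj a) (ι.obj (H c c')) c).hom ≫ (ι.obj a ◁ φ (H c c') c c' (𝟙 (H c c'))) ≫
      (β_ c' (ι.obj a)).inv ≫ (β_ (ι.obj a) c').inv := by
    intro a
    have hK := K a
    rw [hψ a] at hK
    simp only [comp_whiskerRight, Category.assoc]
    simp only [comp_whiskerRight, Category.assoc] at hK
    rw [hK]
    simp [Functor.Monoidal.whiskerRight_μ_δ_assoc]
  refine ⟨?_, ?_, ?_⟩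
  · -- naturality
    intro a a' g
    have L : ι.map (g ▷ H c c') ▷ c ≫ φ _ c _ (ψ a').hom =
        φ _ c _ (ψ a).hom ≫ (ι.map g ▷ c') := by
      rw [hψ a, hψ a']
      have hδ : ι.map (g ▷ H c c') ≫ δ ι a' (H c c') =
          δ ι a (H c c') ≫ (ι.map g ▷ ι.obj (H c c')) := (δ_natural_left ι g _).symm
      calc ι.map (g ▷ H c c') ▷ c ≫ (δ ι a' (H c c') ▷ c) ≫
            (α_ (ι.obj a') (ι.obj (H c c')) c).hom ≫
            (ι.obj a' ◁ φ (H c c') c c' (𝟙 (H c c')))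
          = ((ι.map (g ▷ H c c') ≫ δ ι a' (H c c')) ▷ c) ≫
            (α_ (ι.obj a') (ι.obj (H c c')) c).hom ≫
            (ι.obj a' ◁ φ (H c c') c c' (𝟙 (H c c'))) := by
            simp only [comp_whiskerRight, Category.assoc]
        _ = (δ ι a (H c c') ▷ c) ≫ ((ι.map g ▷ ι.obj (H c c')) ▷ c) ≫
            (α_ (ι.obj a') (ι.obj (H c c')) c).hom ≫
            (ι.obj a' ◁ φ (H c c') c c' (𝟙 (H c c'))) := by
            rw [hδ]; simp only [comp_whiskerRight, Category.assoc]
        _ = (δ ι a (H c c') ▷ c) ≫ (α_ (ι.obj a) (ι.obj (H c c')) c).hom ≫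
            (ι.obj a ◁ φ (H c c') c c' (𝟙 (H c c'))) ≫ (ι.map g ▷ c') := by
            rw [assoc_exch]
        _ = _ := by simp only [Category.assoc]
    have K' := K a
    simp only [Functor.map_comp, comp_whiskerRight, Category.assoc] at K'
    have key : (g ▷ H c c') ≫ (ψ a').hom ≫ D a' =
        ((ψ a).hom ≫ D a ≫ (ψ a).inv ≫ (g ▷ H c c')) ≫ (ψ a').hom := by
      apply (φ _ c _).injective
      rw [← Category.assoc (g ▷ H c c') (ψ a').hom (D a'), hD,
        φnat (g ▷ H c c') (ψ a').hom,
        φnat ((ψ a).hom ≫ D a ≫ (ψ a).inv ≫ (g ▷ H c c')) (ψ a').hom]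
      simp only [Functor.map_comp, comp_whiskerRight, Category.assoc]
      rw [L, reassoc_of% L]
      rw [reassoc_of% K']
      rw [u_nat]
    have key2 : (g ▷ H c c') ≫ (ψ a').hom ≫ D a' ≫ (ψ a').inv =
        (ψ a).hom ≫ D a ≫ (ψ a).inv ≫ (g ▷ H c c') := by
      rw [← cancel_mono (ψ a').hom]
      simp only [Category.assoc, Iso.inv_hom_id, Category.comp_id]
      simpa [Category.assoc] using key
    rw [hb a, hb a']
    calc (g ▷ H c c') ≫ (ψ a').hom ≫ D a' ≫ (ψ a').inv ≫ (β_ a' (H c c')).hom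
        = ((g ▷ H c c') ≫ (ψ a').hom ≫ D a' ≫ (ψ a').inv) ≫ (β_ a' (H c c')).hom := by
          simp only [Category.assoc]
      _ = ((ψ a).hom ≫ D a ≫ (ψ a).inv ≫ (g ▷ H c c')) ≫ (β_ a' (H c c')).hom := by
          rw [key2]
      _ = (ψ a).hom ≫ D a ≫ (ψ a).inv ≫ (β_ a (H c c')).hom ≫ (H c c' ◁ g) := by
          simp only [Category.assoc, BraidedCategory.braiding_naturality_left]
      _ = ((ψ a).hom ≫ D a ≫ (ψ a).inv ≫ (β_ a (H c c')).hom) ≫ (H c c' ◁ g) := by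
          simp only [Category.assoc]
  · -- multiplicativity
    intro a a'
    -- conjugates of the images of `b`
    have hB : ∀ t : A, μ ι t (H c c') ≫ ι.map (b t) ≫ δ ι (H c c') t =
        (μ ι t (H c c') ≫ ι.map ((ψ t).hom ≫ D t ≫ (ψ t).inv) ≫ δ ι t (H c c')) ≫
          (β_ (ι.obj t) (ι.obj (H c c'))).hom := by
      intro t
      rw [hb t]
      simp only [Functor.map_comp, Category.assoc]
      rw [Functor.map_braiding]
      simp
    have hσinv : ι.map (β_ (a ⊗ a') (H c c')).inv =
        δ ι (H c c') (a ⊗ a') ≫ (β_ (ι.obj (a ⊗ a')) (ι.obj (H c c'))).inv ≫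
          μ ι (a ⊗ a') (H c c') := by
      rw [← cancel_epi (ι.map (β_ (a ⊗ a') (H c c')).hom), ← ι.map_comp, Iso.hom_inv_id,
        ι.map_id, Functor.map_braiding]
      simp
    have hainv : μ ι a (H c c' ⊗ a') ≫ ι.map (α_ a (H c c') a').inv =
        (ι.obj a ◁ δ ι (H c c') a') ≫ (α_ (ι.obj a) (ι.obj (H c c')) (ι.obj a')).inv ≫
          (μ ι a (H c c') ▷ ι.obj a') ≫ μ ι (a ⊗ H c c') a' := by
      calc μ ι a (H c c' ⊗ a') ≫ ι.map (α_ a (H c c') a').inv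
          = (ι.obj a ◁ δ ι (H c c') a') ≫ (ι.obj a ◁ μ ι (H c c') a') ≫
              μ ι a (H c c' ⊗ a') ≫ ι.map (α_ a (H c c') a').inv := by
            rw [Functor.Monoidal.whiskerLeft_δ_μ_assoc]
        _ = _ := by rw [Functor.LaxMonoidal.associativity_inv]
    have hassoc2 : μ ι (H c c' ⊗ a) a' ≫ ι.map (α_ (H c c') a a').hom =
        (δ ι (H c c') a ▷ ι.obj a') ≫ (α_ (ι.obj (H c c')) (ι.obj a) (ι.obj a')).hom ≫
          (ι.obj (H c c') ◁ μ ι a a') ≫ μ ι (H c c') (a ⊗ a') := by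
      calc μ ι (H c c' ⊗ a) a' ≫ ι.map (α_ (H c c') a a').hom
          = (δ ι (H c c') a ▷ ι.obj a') ≫ (μ ι (H c c') a ▷ ι.obj a') ≫
              μ ι (H c c' ⊗ a) a' ≫ ι.map (α_ (H c c') a a').hom := by
            rw [Functor.Monoidal.whiskerRight_δ_μ_assoc]
        _ = _ := by rw [Functor.LaxMonoidal.associativity]
    have hsig : μ ι (H c c') (a ⊗ a') ≫ ι.map (β_ (a ⊗ a') (H c c')).inv ≫
        δ ι (a ⊗ a') (H c c') = (β_ (ι.obj (a ⊗ a')) (ι.obj (H c c'))).inv := by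
      rw [hσinv]
      simp
    have hFC : (μ ι a a' ▷ ι.obj (H c c')) ≫ μ ι (a ⊗ a') (H c c') ≫
        ι.map ((α_ a a' (H c c')).hom ≫ (a ◁ b a') ≫ (α_ a (H c c') a').inv ≫
          (b a ▷ a') ≫ (α_ (H c c') a a').hom ≫ (β_ (a ⊗ a') (H c c')).inv) ≫
        δ ι (a ⊗ a') (H c c') =
        ((α_ (ι.obj a) (ι.obj a') (ι.obj (H c c'))).hom ≫
          ι.obj a ◁ ((μ ι a' (H c c') ≫ ι.map ((ψ a').hom ≫ D a' ≫ (ψ a').inv) ≫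
            δ ι a' (H c c')) ≫ (β_ (ι.obj a') (ι.obj (H c c'))).hom) ≫
          (α_ (ι.obj a) (ι.obj (H c c')) (ι.obj a')).inv ≫
          ((μ ι a (H c c') ≫ ι.map ((ψ a).hom ≫ D a ≫ (ψ a).inv) ≫
            δ ι a (H c c')) ≫ (β_ (ι.obj a) (ι.obj (H c c'))).hom) ▷ ι.obj a' ≫
          (α_ (ι.obj (H c c')) (ι.obj a) (ι.obj a')).hom ≫
          (β_ (ι.obj a ⊗ ι.obj a') (ι.obj (H c c'))).inv) ≫
        (μ ι a a' ▷ ι.obj (H c c')) := by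
      simp only [Functor.map_comp, Category.assoc]
      rw [Functor.LaxMonoidal.associativity_assoc]
      rw [← Functor.LaxMonoidal.μ_natural_right_assoc]
      rw [reassoc_of% hainv]
      rw [← Functor.LaxMonoidal.μ_natural_left_assoc]
      rw [reassoc_of% hassoc2]
      rw [hsig]
      rw [← MonoidalCategory.whiskerLeft_comp_assoc, ← MonoidalCategory.whiskerLeft_comp_assoc]
      simp only [Category.assoc]
      rw [hB a']
      rw [← comp_whiskerRight_assoc, ← comp_whiskerRight_assoc]
      simp only [Category.assoc]
      rw [hB a]
      rw [binv_nat (μ ι a a') (ι.obj (H c c'))]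
      simp only [Functor.map_comp, MonoidalCategory.whiskerLeft_comp, comp_whiskerRight,
        Category.assoc]
    have hgz : μ ι (a ⊗ a') (H c c') ≫
        ι.map ((α_ a a' (H c c')).hom ≫ (a ◁ b a') ≫ (α_ a (H c c') a').inv ≫
          (b a ▷ a') ≫ (α_ (H c c') a a').hom ≫ (β_ (a ⊗ a') (H c c')).inv) ≫
        δ ι (a ⊗ a') (H c c') =
        ((Functor.Monoidal.μIso ι a a').inv ▷ ι.obj (H c c')) ≫
        ((α_ (ι.obj a) (ι.obj a') (ι.obj (H c c'))).hom ≫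
          ι.obj a ◁ ((μ ι a' (H c c') ≫ ι.map ((ψ a').hom ≫ D a' ≫ (ψ a').inv) ≫
            δ ι a' (H c c')) ≫ (β_ (ι.obj a') (ι.obj (H c c'))).hom) ≫
          (α_ (ι.obj a) (ι.obj (H c c')) (ι.obj a')).inv ≫
          ((μ ι a (H c c') ≫ ι.map ((ψ a).hom ≫ D a ≫ (ψ a).inv) ≫
            δ ι a (H c c')) ≫ (β_ (ι.obj a) (ι.obj (H c c'))).hom) ▷ ι.obj a' ≫
          (α_ (ι.obj (H c c')) (ι.obj a) (ι.obj a')).hom ≫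
          (β_ (ι.obj a ⊗ ι.obj a') (ι.obj (H c c'))).inv) ≫
        ((Functor.Monoidal.μIso ι a a').hom ▷ ι.obj (H c c')) := by
      rw [← cancel_epi ((Functor.Monoidal.μIso ι a a').hom ▷ ι.obj (H c c'))]
      simp only [Functor.Monoidal.μIso_hom, Functor.Monoidal.μIso_inv]
      rw [Functor.Monoidal.whiskerRight_μ_δ_assoc]
      simpa using hFC
    have hPz := P_conj (φ (H c c') c c' (𝟙 (H c c'))) (Functor.Monoidal.μIso ι a a') _
      (P_tensor_core (φ (H c c') c c' (𝟙 (H c c')))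
        (μ ι a (H c c') ≫ ι.map ((ψ a).hom ≫ D a ≫ (ψ a).inv) ≫ δ ι a (H c c'))
        (μ ι a' (H c c') ≫ ι.map ((ψ a').hom ≫ D a' ≫ (ψ a').inv) ≫ δ ι a' (H c c'))
        (P a) (P a'))
    rw [← hgz] at hPz
    have hmain : (ψ (a ⊗ a')).hom ≫ D (a ⊗ a') =
        ((α_ a a' (H c c')).hom ≫ (a ◁ b a') ≫ (α_ a (H c c') a').inv ≫
          (b a ▷ a') ≫ (α_ (H c c') a a').hom ≫ (β_ (a ⊗ a') (H c c')).inv) ≫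
        (ψ (a ⊗ a')).hom := by
      apply (φ _ c _).injective
      rw [hD, φnat, hψ]
      have hins : ι.map ((α_ a a' (H c c')).hom ≫ (a ◁ b a') ≫ (α_ a (H c c') a').inv ≫
            (b a ▷ a') ≫ (α_ (H c c') a a').hom ≫ (β_ (a ⊗ a') (H c c')).inv) ▷ c ≫
          δ ι (a ⊗ a') (H c c') ▷ c =
          δ ι (a ⊗ a') (H c c') ▷ c ≫
            (μ ι (a ⊗ a') (H c c') ≫
              ι.map ((α_ a a' (H c c')).hom ≫ (a ◁ b a') ≫ (α_ a (H c c') a').inv ≫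
                (b a ▷ a') ≫ (α_ (H c c') a a').hom ≫ (β_ (a ⊗ a') (H c c')).inv) ≫
              δ ι (a ⊗ a') (H c c')) ▷ c := by
        simp only [comp_whiskerRight, Category.assoc, Functor.Monoidal.whiskerRight_δ_μ_assoc]
      rw [reassoc_of% hins, hPz]
      simp only [Category.assoc]
    rw [hb (a ⊗ a')]
    rw [reassoc_of% hmain]
    simp
  · -- invertibility
    intro a
    have hiso : IsIso (D a) := by
      refine ⟨(φ (H c (ι.obj a ⊗ c')) c (ι.obj a ⊗ c')).symm
        (φ _ c _ (𝟙 (H c (ι.obj a ⊗ c'))) ≫ (β_ (ι.obj a) c').hom ≫ (β_ c' (ι.obj a)).hom),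
        ?_, ?_⟩
      · apply (φ _ c _).injective
        rw [φnat, Equiv.apply_symm_apply]
        have h2 : φ _ c _ (D a) =
            φ _ c _ (𝟙 (H c (ι.obj a ⊗ c'))) ≫ (β_ c' (ι.obj a)).inv ≫ (β_ (ι.obj a) c').inv := by
          simpa using hD a _ (𝟙 (H c (ι.obj a ⊗ c')))
        have h3 : ι.map (D a) ▷ c ≫ φ _ c _ (𝟙 (H c (ι.obj a ⊗ c'))) = φ _ c _ (D a) :=
          (phi_eval (D a)).symm
        rw [reassoc_of% h3, h2]
        simp
      · apply (φ _ c _).injective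
        rw [hD, Equiv.apply_symm_apply]
        simp
    rw [hb a]
    infer_instance
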